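/- For all f, g ∈ F^N_0 = {f ∈ ℝ^N : f_0 = 0} (extended by the convention f_{−1} = f_N = 0), with (Df)_t = f_{t+1} + f_{t−1} for 0 ≤ t ≤ N−1, one has the identity (C^N D f, g)_{ℝ^N} = (A^N W^N f, W^N g)_{ℝ^N}, where A^N is the N×N Jacobi block of the coefficients. -/

import Mathlib

open scoped BigOperators
open Matrix

/-- Solution `u^f` of the semi-infinite dynamical system. -/
def solS (a b f : ℕ → ℝ) : ℕ → ℕ → ℝ
  | n, 0 => if n = 0 then f 0 else 0
  | n, 1 =>
      if n = 0 then f 1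
      else a n * solS a b f (n + 1) 0 + a (n - 1) * solS a b f (n - 1) 0
        + b n * solS a b f n 0
  | n, t + 2 =>
      if n = 0 then f (t + 2)
      else a n * solS a b f (n + 1) (t + 1) + a (n - 1) * solS a b f (n - 1) (t + 1)
        + b n * solS a b f n (t + 1) - solS a b f n t
  termination_by n t => t

/-- Extension of a finite control by zero. -/
def ctrl (T : ℕ) (f : Fin T → ℝ) : ℕ → ℝ := fun t => if h : t < T then f ⟨t, h⟩ else 0

/-- The control operator `W^T : ℝ^T → ℝ^T`, `f ↦ (u^f_{1,T},…,u^f_{T,T})`. -/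
def WFun (a b : ℕ → ℝ) (T : ℕ) (f : Fin T → ℝ) : Fin T → ℝ :=
  fun n => solS a b (ctrl T f) ((n : ℕ) + 1) T

/-- The control operator `W^T` as a matrix. -/
def WSemiMat (a b : ℕ → ℝ) (T : ℕ) : Matrix (Fin T) (Fin T) ℝ :=
  Matrix.of fun n j => WFun a b T (fun k => if k = j then 1 else 0) n

/-- Connecting operator `C^T = (W^T)ᵀ W^T`. -/
def CSemiMat (a b : ℕ → ℝ) (T : ℕ) : Matrix (Fin T) (Fin T) ℝ :=
  (WSemiMat a b T)ᵀ * WSemiMat a b T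

/-- The `N×N` Jacobi matrix `A^N` with diagonal `b_1,…,b_N`, off-diagonal `a_1,…,a_{N-1}`. -/
def jacobiMat (N : ℕ) (a b : ℕ → ℝ) : Matrix (Fin N) (Fin N) ℝ :=
  Matrix.of fun i j =>
    if (i : ℕ) = (j : ℕ) then b ((i : ℕ) + 1)
    else if (i : ℕ) + 1 = (j : ℕ) then a ((i : ℕ) + 1)
    else if (j : ℕ) + 1 = (i : ℕ) then a ((j : ℕ) + 1)
    else 0

/-- The operator `D : ℝ^N → ℝ^N`, `(Df)_t = f_{t+1} + f_{t-1}`, with the conventions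
`f_{-1} = f_N = 0`. -/
def Dop (N : ℕ) (f : Fin N → ℝ) : Fin N → ℝ :=
  fun t => (if h : (t : ℕ) + 1 < N then f ⟨(t : ℕ) + 1, h⟩ else 0)
    + (if h : 1 ≤ (t : ℕ) then f ⟨(t : ℕ) - 1, by omega⟩ else 0)


theorem solS0 (a b f : ℕ → ℝ) (n : ℕ) : solS a b f n 0 = if n = 0 then f 0 else 0 := by
  rw [solS]

theorem solS1 (a b f : ℕ → ℝ) (n : ℕ) : solS a b f n 1 = if n = 0 then f 1
    else a n * solS a b f (n + 1) 0 + a (n - 1) * solS a b f (n - 1) 0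
      + b n * solS a b f n 0 := by
  conv_lhs => rw [solS]

theorem solS2 (a b f : ℕ → ℝ) (n t : ℕ) : solS a b f n (t+2) = if n = 0 then f (t + 2)
    else a n * solS a b f (n + 1) (t + 1) + a (n - 1) * solS a b f (n - 1) (t + 1)
      + b n * solS a b f n (t + 1) - solS a b f n t := by
  conv_lhs => rw [solS]

theorem solS_atzero (a b f : ℕ → ℝ) (t : ℕ) : solS a b f 0 t = f t := by
  rcases t with _ | _ | t <;> simp [solS0, solS1, solS2]

theorem solS_speed (a b f : ℕ → ℝ) : ∀ t n, t < n → solS a b f n t = 0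
  | 0, n, h => by rw [solS0]; exact if_neg (by omega)
  | 1, n, h => by
      rw [solS1, if_neg (by omega), solS_speed a b f 0 (n+1) (by omega),
        solS_speed a b f 0 (n-1) (by omega), solS_speed a b f 0 n (by omega)]
      ring
  | (t+2), n, h => by
      rw [solS2, if_neg (by omega), solS_speed a b f (t+1) (n+1) (by omega),
        solS_speed a b f (t+1) (n-1) (by omega), solS_speed a b f (t+1) n (by omega),
        solS_speed a b f t n (by omega)]
      ring

theorem solS_time0 (a b f : ℕ → ℝ) (h : f 0 = 0) (n : ℕ) : solS a b f n 0 = 0 := by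
  rw [solS0]; split <;> simp [h]

theorem solS_time1 (a b f : ℕ → ℝ) (h : f 0 = 0) {n : ℕ} (hn : n ≠ 0) : solS a b f n 1 = 0 := by
  rw [solS1, if_neg hn, solS_time0 a b f h, solS_time0 a b f h, solS_time0 a b f h]
  ring

theorem solS_congr (a b : ℕ → ℝ) :
    ∀ t n (F G : ℕ → ℝ), (∀ s, s + n ≤ t → F s = G s) → solS a b F n t = solS a b G n t
  | 0, n, F, G, h => by
      rw [solS0, solS0]
      by_cases hn : n = 0
      · subst hn; simp [h 0 (by omega)]
      · simp [hn]
  | 1, n, F, G, h => by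
      by_cases hn : n = 0
      · subst hn; rw [solS_atzero, solS_atzero]; exact h 1 (by omega)
      · rw [solS1, solS1, if_neg hn, if_neg hn,
          solS_congr a b 0 (n+1) F G (fun s hs => h s (by omega)),
          solS_congr a b 0 (n-1) F G (fun s hs => h s (by omega)),
          solS_congr a b 0 n F G (fun s hs => h s (by omega))]
  | (t+2), n, F, G, h => by
      by_cases hn : n = 0
      · subst hn; rw [solS_atzero, solS_atzero]; exact h (t+2) (by omega)
      · rw [solS2, solS2, if_neg hn, if_neg hn,
          solS_congr a b (t+1) (n+1) F G (fun s hs => h s (by omega)),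
          solS_congr a b (t+1) (n-1) F G (fun s hs => h s (by omega)),
          solS_congr a b (t+1) n F G (fun s hs => h s (by omega)),
          solS_congr a b t n F G (fun s hs => h s (by omega))]
  termination_by t => t

theorem solS_rec2 (a b f : ℕ → ℝ) {n : ℕ} (hn : n ≠ 0) (t : ℕ) :
    solS a b f n (t+2) = a n * solS a b f (n + 1) (t + 1) + a (n - 1) * solS a b f (n - 1) (t + 1)
      + b n * solS a b f n (t + 1) - solS a b f n t := by
  rw [solS2, if_neg hn]

theorem solS_shift (a b F : ℕ → ℝ) (h0 : F 0 = 0) :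
    ∀ t n, solS a b (fun s => F (s+1) + F (s-1)) n t
      = solS a b F n (t+1) + solS a b F n (t-1)
  | 0, n => by
      by_cases hn : n = 0
      · subst hn; rw [solS_atzero, solS_atzero, solS_atzero]
      · rw [solS0, if_neg hn, solS_time1 a b F h0 hn, solS_time0 a b F h0]
        ring
  | 1, n => by
      by_cases hn : n = 0
      · subst hn; rw [solS_atzero, solS_atzero, solS_atzero]
      · show solS a b (fun s => F (s+1) + F (s-1)) n 1 = solS a b F n 2 + solS a b F n 0
        have hG0 : ∀ m : ℕ, solS a b (fun s => F (s+1) + F (s-1)) m 0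
            = if m = 0 then F 1 else 0 := by
          intro m; rw [solS0]; split <;> simp [h0]
        rw [solS1, if_neg hn, hG0, hG0, hG0, if_neg hn, if_neg (by omega : n + 1 ≠ 0),
          solS_rec2 a b F hn 0, solS_time1 a b F h0 (by omega : n + 1 ≠ 0),
          solS_time1 a b F h0 hn, solS_time0 a b F h0]
        by_cases h1 : n - 1 = 0
        · rw [if_pos h1, h1, solS_atzero]; ring
        · rw [if_neg h1, solS_time1 a b F h0 h1]; ring
  | 2, n => by
      by_cases hn : n = 0
      · subst hn; rw [solS_atzero, solS_atzero, solS_atzero]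
      · show solS a b (fun s => F (s+1) + F (s-1)) n 2 = solS a b F n 3 + solS a b F n 1
        rw [solS_rec2 a b (fun s => F (s+1) + F (s-1)) hn 0]
        have e1 : solS a b (fun s => F (s+1) + F (s-1)) (n+1) 1
            = solS a b F (n+1) 2 + solS a b F (n+1) 0 := solS_shift a b F h0 1 (n+1)
        have e2 : solS a b (fun s => F (s+1) + F (s-1)) (n-1) 1
            = solS a b F (n-1) 2 + solS a b F (n-1) 0 := solS_shift a b F h0 1 (n-1)
        have e3 : solS a b (fun s => F (s+1) + F (s-1)) n 1
            = solS a b F n 2 + solS a b F n 0 := solS_shift a b F h0 1 n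
        have e4 : solS a b (fun s => F (s+1) + F (s-1)) n 0
            = solS a b F n 1 + solS a b F n 0 := solS_shift a b F h0 0 n
        rw [e1, e2, e3, e4, solS_rec2 a b F hn 1, solS1, if_neg hn,
          solS_time0 a b F h0]
        simp only [solS_time0 a b F h0]
        ring
  | (s+3), n => by
      by_cases hn : n = 0
      · subst hn; rw [solS_atzero, solS_atzero, solS_atzero]
      · show solS a b (fun s => F (s+1) + F (s-1)) n (s+3)
            = solS a b F n (s+4) + solS a b F n (s+2)
        have hrec : solS a b (fun s => F (s+1) + F (s-1)) n (s+3)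
            = a n * solS a b (fun s => F (s+1) + F (s-1)) (n+1) (s+2)
            + a (n-1) * solS a b (fun s => F (s+1) + F (s-1)) (n-1) (s+2)
            + b n * solS a b (fun s => F (s+1) + F (s-1)) n (s+2)
            - solS a b (fun s => F (s+1) + F (s-1)) n (s+1) :=
          solS_rec2 a b _ hn (s+1)
        have e1 : solS a b (fun s => F (s+1) + F (s-1)) (n+1) (s+2)
            = solS a b F (n+1) (s+3) + solS a b F (n+1) (s+1) := solS_shift a b F h0 (s+2) (n+1)
        have e2 : solS a b (fun s => F (s+1) + F (s-1)) (n-1) (s+2)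
            = solS a b F (n-1) (s+3) + solS a b F (n-1) (s+1) := solS_shift a b F h0 (s+2) (n-1)
        have e3 : solS a b (fun s => F (s+1) + F (s-1)) n (s+2)
            = solS a b F n (s+3) + solS a b F n (s+1) := solS_shift a b F h0 (s+2) n
        have e4 : solS a b (fun s => F (s+1) + F (s-1)) n (s+1)
            = solS a b F n (s+2) + solS a b F n s := solS_shift a b F h0 (s+1) n
        have r1 : solS a b F n (s+4)
            = a n * solS a b F (n+1) (s+3) + a (n-1) * solS a b F (n-1) (s+3)
            + b n * solS a b F n (s+3) - solS a b F n (s+2) := solS_rec2 a b F hn (s+2)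
        have r2 : solS a b F n (s+2)
            = a n * solS a b F (n+1) (s+1) + a (n-1) * solS a b F (n-1) (s+1)
            + b n * solS a b F n (s+1) - solS a b F n s := solS_rec2 a b F hn s
        rw [hrec, e1, e2, e3, e4, r1, r2]
        ring
  termination_by t => t

theorem solS_linear (a b : ℕ → ℝ) {ι : Type*} [Fintype ι] (c : ι → ℝ) (F : ι → ℕ → ℝ) :
    ∀ t n, solS a b (fun s => ∑ j, c j * F j s) n t = ∑ j, c j * solS a b (F j) n t
  | 0, n => by
      by_cases hn : n = 0 <;> simp [solS0, hn]
  | 1, n => by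
      by_cases hn : n = 0
      · subst hn; simp only [solS_atzero]
      · rw [solS1, if_neg hn, solS_linear a b c F 0 (n+1), solS_linear a b c F 0 (n-1),
          solS_linear a b c F 0 n, Finset.mul_sum, Finset.mul_sum, Finset.mul_sum,
          ← Finset.sum_add_distrib, ← Finset.sum_add_distrib]
        refine Finset.sum_congr rfl fun j _ => ?_
        rw [solS1, if_neg hn]; ring
  | (t+2), n => by
      by_cases hn : n = 0
      · subst hn; simp only [solS_atzero]
      · rw [solS_rec2 a b _ hn t, solS_linear a b c F (t+1) (n+1), solS_linear a b c F (t+1) (n-1),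
          solS_linear a b c F (t+1) n, solS_linear a b c F t n, Finset.mul_sum, Finset.mul_sum,
          Finset.mul_sum, ← Finset.sum_add_distrib, ← Finset.sum_add_distrib,
          ← Finset.sum_sub_distrib]
        refine Finset.sum_congr rfl fun j _ => ?_
        rw [solS_rec2 a b _ hn t]; ring
  termination_by t => t

theorem ctrl_as_sum (N : ℕ) (x : Fin N → ℝ) :
    ctrl N x = fun s => ∑ j : Fin N, x j * ctrl N (fun k => if k = j then 1 else 0) s := by
  funext s
  by_cases hs : s < N
  · simp [ctrl, hs]
  · simp [ctrl, hs]

theorem W_mulVec (a b : ℕ → ℝ) (N : ℕ) (x : Fin N → ℝ) :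
    (WSemiMat a b N).mulVec x = WFun a b N x := by
  funext n
  have h1 : WFun a b N x n = ∑ j : Fin N, x j * WFun a b N (fun k => if k = j then 1 else 0) n := by
    unfold WFun
    rw [ctrl_as_sum N x, solS_linear]
  rw [h1, Matrix.mulVec]
  simp only [dotProduct, WSemiMat, Matrix.of_apply]
  exact Finset.sum_congr rfl fun j _ => mul_comm _ _

theorem jacobi_row (N : ℕ) (a b : ℕ → ℝ) (n : Fin N) (v : Fin N → ℝ) :
    ((jacobiMat N a b).mulVec v) n
      = (if h : (n : ℕ) + 1 < N then a ((n : ℕ) + 1) * v ⟨(n : ℕ) + 1, h⟩ else 0)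
        + (if h : 1 ≤ (n : ℕ) then a (n : ℕ) * v ⟨(n : ℕ) - 1, by omega⟩ else 0)
        + b ((n : ℕ) + 1) * v n := by
  rw [Matrix.mulVec, dotProduct]
  have key : ∀ j : Fin N, jacobiMat N a b n j * v j
      = (if j = n then b ((n : ℕ) + 1) * v j else 0)
      + (if (j : ℕ) = (n : ℕ) + 1 then a ((n : ℕ) + 1) * v j else 0)
      + (if (j : ℕ) + 1 = (n : ℕ) then a (n : ℕ) * v j else 0) := by
    intro j
    by_cases h1 : (n : ℕ) = (j : ℕ)
    · have hj : j = n := Fin.ext h1.symm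
      subst hj
      simp [jacobiMat]
    · have hjn : ¬ j = n := fun h => h1 (congrArg Fin.val h).symm
      by_cases h2 : (n : ℕ) + 1 = (j : ℕ)
      · simp only [jacobiMat, Matrix.of_apply, if_neg h1, if_pos h2, if_neg hjn,
          if_pos h2.symm, if_neg (by omega : ¬((j : ℕ) + 1 = (n : ℕ)))]
        ring
      · have h2' : ¬ ((j : ℕ) = (n : ℕ) + 1) := fun h => h2 h.symm
        by_cases h3 : (j : ℕ) + 1 = (n : ℕ)
        · simp only [jacobiMat, Matrix.of_apply, if_neg h1, if_neg h2, if_neg hjn,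
            if_neg h2', if_pos h3, h3]
          simp [mul_comm]
        · simp only [jacobiMat, Matrix.of_apply, if_neg h1, if_neg h2, if_neg h3,
            if_neg hjn, if_neg h2']
          ring
  have hS1 : (∑ j : Fin N, if j = n then b ((n : ℕ) + 1) * v j else 0)
      = b ((n : ℕ) + 1) * v n := by
    rw [Finset.sum_ite_eq' Finset.univ n (fun j => b ((n : ℕ) + 1) * v j)]
    simp
  have hS2 : (∑ j : Fin N, if (j : ℕ) = (n : ℕ) + 1 then a ((n : ℕ) + 1) * v j else 0)
      = (if h : (n : ℕ) + 1 < N then a ((n : ℕ) + 1) * v ⟨(n : ℕ) + 1, h⟩ else 0) := by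
    by_cases h : (n : ℕ) + 1 < N
    · rw [dif_pos h]
      have he : ∀ j : Fin N, ((j : ℕ) = (n : ℕ) + 1) = (j = (⟨(n : ℕ) + 1, h⟩ : Fin N)) := by
        intro j; simp [Fin.ext_iff]
      simp only [he]
      rw [Finset.sum_ite_eq' Finset.univ (⟨(n : ℕ) + 1, h⟩ : Fin N)
        (fun j => a ((n : ℕ) + 1) * v j)]
      simp
    · rw [dif_neg h]
      refine Finset.sum_eq_zero fun j _ => ?_
      rw [if_neg (by omega : ¬ ((j : ℕ) = (n : ℕ) + 1))]
  have hS3 : (∑ j : Fin N, if (j : ℕ) + 1 = (n : ℕ) then a (n : ℕ) * v j else 0)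
      = (if h : 1 ≤ (n : ℕ) then a (n : ℕ) * v ⟨(n : ℕ) - 1, by omega⟩ else 0) := by
    by_cases h : 1 ≤ (n : ℕ)
    · rw [dif_pos h]
      have he : ∀ j : Fin N, ((j : ℕ) + 1 = (n : ℕ))
          = (j = (⟨(n : ℕ) - 1, by omega⟩ : Fin N)) := by
        intro j
        simp only [Fin.ext_iff]
        exact propext ⟨fun hh => by omega, fun hh => by omega⟩
      simp only [he]
      rw [Finset.sum_ite_eq' Finset.univ (⟨(n : ℕ) - 1, by omega⟩ : Fin N)
        (fun j => a (n : ℕ) * v j)]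
      simp
    · rw [dif_neg h]
      refine Finset.sum_eq_zero fun j _ => ?_
      rw [if_neg (by omega : ¬ ((j : ℕ) + 1 = (n : ℕ)))]
  rw [Finset.sum_congr rfl fun j _ => key j, Finset.sum_add_distrib, Finset.sum_add_distrib,
    hS1, hS2, hS3]
  ring

theorem keyW (N : ℕ) (hN : 1 ≤ N) (a b : ℕ → ℝ) (f : Fin N → ℝ)
    (hf : f ⟨0, hN⟩ = 0) :
    WFun a b N (Dop N f) = (jacobiMat N a b).mulVec (WFun a b N f) := by
  have h0 : ctrl N f 0 = 0 := by
    have hlt : (0:ℕ) < N := hN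
    simp only [ctrl, dif_pos hlt]
    exact hf
  funext n
  rw [jacobi_row]
  show solS a b (ctrl N (Dop N f)) ((n:ℕ)+1) N = _
  have hcong : solS a b (ctrl N (Dop N f)) ((n:ℕ)+1) N
      = solS a b (fun s => ctrl N f (s+1) + ctrl N f (s-1)) ((n:ℕ)+1) N := by
    apply solS_congr
    intro s hs
    have hsN : s < N := by omega
    by_cases h1 : 1 ≤ s
    · have h2 : s - 1 < N := by omega
      simp [ctrl, Dop, hsN, h1, h2]
    · have hs0 : s = 0 := by omega
      subst hs0
      rw [show (0:ℕ)-1 = 0 from rfl, h0]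
      simp [ctrl, Dop, hsN]
  rw [hcong, solS_shift a b (ctrl N f) h0 N ((n:ℕ)+1)]
  obtain ⟨M, rfl⟩ : ∃ M, N = M + 1 := ⟨N - 1, by omega⟩
  rw [show M + 1 + 1 = M + 2 from rfl,
    solS_rec2 a b (ctrl (M+1) f) (by omega : (n:ℕ)+1 ≠ 0) M,
    show M + 1 - 1 = M from rfl]
  simp only [Nat.add_sub_cancel, WFun, Fin.val_mk]
  have hctrlN : ctrl (M+1) f (M+1) = 0 := by simp [ctrl]
  by_cases hlt : (n:ℕ) + 1 < M + 1
  · rw [dif_pos hlt]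
    by_cases h1 : 1 ≤ (n:ℕ)
    · rw [dif_pos h1, show (n:ℕ) - 1 + 1 = (n:ℕ) from by omega]
      ring
    · rw [dif_neg h1]
      have hn0 : (n:ℕ) = 0 := by omega
      rw [hn0, solS_atzero, hctrlN]
      ring
  · rw [dif_neg hlt,
      solS_speed a b (ctrl (M+1) f) (M+1) ((n:ℕ)+1+1) (by omega)]
    by_cases h1 : 1 ≤ (n:ℕ)
    · rw [dif_pos h1, show (n:ℕ) - 1 + 1 = (n:ℕ) from by omega]
      ring
    · rw [dif_neg h1]
      have hn0 : (n:ℕ) = 0 := by omega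
      rw [hn0, solS_atzero, hctrlN]
      ring

/-- for `f, g ∈ F^N_0`, `(C^N D f, g) = (A^N W^N f, W^N g)`. -/
theorem connecting_operator_jacobi_identity
    (N : ℕ) (hN : 1 ≤ N) (a b : ℕ → ℝ) (ha0 : a 0 = 1) (hapos : ∀ n, 0 < a n)
    (f g : Fin N → ℝ)
    (hf : f ⟨0, by omega⟩ = 0) (hg : g ⟨0, by omega⟩ = 0) :
    dotProduct ((CSemiMat a b N).mulVec (Dop N f)) g
      = dotProduct ((jacobiMat N a b).mulVec (WFun a b N f)) (WFun a b N g) := by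
  have h1 : (CSemiMat a b N).mulVec (Dop N f)
      = (WSemiMat a b N)ᵀ.mulVec (WFun a b N (Dop N f)) := by
    rw [CSemiMat, ← Matrix.mulVec_mulVec, W_mulVec]
  rw [h1, dotProduct_comm, Matrix.dotProduct_mulVec, Matrix.vecMul_transpose,
    W_mulVec, dotProduct_comm, keyW N hN a b f hf]
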